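/- arXiv:math/0510219 — 3 statements merged into one kernel-verified Lean document; each statement's English description precedes it below -/
import Mathlib

section
/- Let φ ∈ L^∞ ∩ H² be outer and let d ∈ H² be such that conj(φ)·d ∈ H²₋ (i.e. ĉ(conj(φ)d, n) = 0 for all n ≥ 0). Then d = 0 in L². (This expresses that the sums (1/T_e)H² + H²₋ and (1/conj(T_e))H²₋ + H² are direct sums when T_e is outer.) -/
open MeasureTheory Complex Filter ComplexConjugate
open scoped Real Topology

noncomputable section

instance : Fact ((0:ℝ) < 2 * Real.pi) := ⟨Real.two_pi_pos⟩

/-- The unit circle, modeled additively as `ℝ / 2πℤ`; the point `t` corresponds to `e^{it}`. -/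
abbrev 𝕋c : Type := AddCircle (2 * Real.pi)

/-- Normalized Lebesgue (Haar) measure on the circle. -/
abbrev m : Measure 𝕋c := AddCircle.haarAddCircle

/-- Squared `L²` norm. -/
def sqNorm (f : 𝕋c → ℂ) : ℝ := ∫ t, ‖f t‖ ^ 2 ∂m

/-- `‖P₋ g‖²`, expressed via Parseval: the sum of `|ĉ(g,n)|²` over `n < 0`. -/
def negSq (g : 𝕋c → ℂ) : ℝ := ∑' n : ℤ, if n < 0 then ‖fourierCoeff g n‖ ^ 2 else 0

/-- Membership in the Hardy space `H²`. -/
def InH2 (f : 𝕋c → ℂ) : Prop := MemLp f 2 m ∧ ∀ n : ℤ, n < 0 → fourierCoeff f n = 0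

/-- Membership in `H²₋ = L² ⊖ H²`. -/
def InH2neg (f : 𝕋c → ℂ) : Prop := MemLp f 2 m ∧ ∀ n : ℤ, 0 ≤ n → fourierCoeff f n = 0

/-- Value of (the analytic extension of) `f` at a point `w` of the unit disk. -/
def evalD (f : 𝕋c → ℂ) (w : ℂ) : ℂ := ∑' n : ℕ, fourierCoeff f (n : ℤ) * w ^ n

/-- `p = P₋ g`: characterization of the negative Riesz projection via Fourier coefficients. -/
def IsPneg (g p : 𝕋c → ℂ) : Prop :=
  MemLp p 2 m ∧ (∀ n : ℤ, n < 0 → fourierCoeff p n = fourierCoeff g n) ∧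
    ∀ n : ℤ, 0 ≤ n → fourierCoeff p n = 0

/-- Analytic polynomials on the circle. -/
def IsAnalyticPoly (p : 𝕋c → ℂ) : Prop :=
  ∃ (N : ℕ) (c : ℕ → ℂ), p = fun t => ∑ j ∈ Finset.range N, c j * fourier (j : ℤ) t

/-- `φ` is outer: `φ ∈ H²` and `{φ·p : p analytic polynomial}` is `L²`-dense in `H²`. -/
def IsOuter (φ : 𝕋c → ℂ) : Prop :=
  InH2 φ ∧ ∀ g : 𝕋c → ℂ, InH2 g → ∀ ε : ℝ, 0 < ε →
    ∃ p, IsAnalyticPoly p ∧ ∫ t, ‖φ t * p t - g t‖ ^ 2 ∂m < ε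

/-- `f ∈ H²` is admissible: it vanishes at all but finitely many of the points `ζ k`. -/
def Admissible (ζ : ℕ → ℂ) (f : 𝕋c → ℂ) : Prop :=
  InH2 f ∧ {k | evalD f (ζ k) ≠ 0}.Finite

/-- The quadratic form `Q(f) = ‖f‖² − ‖P₋(Wf)‖² + Σ ν_k |f(ζ_k)|²`. -/
def Q (W : 𝕋c → ℂ) (ζ : ℕ → ℂ) (ν : ℕ → ℝ) (f : 𝕋c → ℂ) : ℝ :=
  sqNorm f - negSq (fun t => W t * f t) + ∑' k, ν k * ‖evalD f (ζ k)‖ ^ 2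

/-- `S(α) = sup{|ĉ(f,0)| : f admissible, Q_α(f) ≤ 1}`, the value at `0` of the normalized
reproducing kernel. -/
def S (W : 𝕋c → ℂ) (ζ : ℕ → ℂ) (ν : ℕ → ℝ) : ℝ :=
  sSup { x | ∃ f, Admissible ζ f ∧ Q W ζ ν f ≤ 1 ∧ x = ‖fourierCoeff f 0‖ }

/-- The Blaschke product with zeros `ζ k`. -/
def Bprod (ζ : ℕ → ℂ) (z : ℂ) : ℂ :=
  ∏' k, ((‖ζ k‖ : ℂ) / ζ k) * ((ζ k - z) / (1 - conj (ζ k) * z))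

/-- Membership of the pair `(f₁, f₂)` in the space `V = L²_R` (with `φ` the boundary values
of the Szegő outer function `T_e`). -/
def MemV (R φ f₁ f₂ : 𝕋c → ℂ) : Prop :=
  AEStronglyMeasurable f₁ m ∧ AEStronglyMeasurable f₂ m ∧
  MemLp (fun t => φ t * f₁ t) 2 m ∧
  MemLp (fun t => conj (φ t) * f₂ t) 2 m ∧
  (∀ n : ℤ, 0 ≤ n → fourierCoeff (fun t => conj (φ t) * f₂ t) n = 0) ∧
  MemLp (fun t => R t * f₁ t + f₂ t) 2 m ∧
  (∀ n : ℤ, n < 0 → fourierCoeff (fun t => R t * f₁ t + f₂ t) n = 0)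

/-- The squared `V`-norm `‖(f₁,f₂)‖_V² = ∫ (|Rf₁+f₂|² + |φf₁|²) dm`. -/
def VnormSq (R φ f₁ f₂ : 𝕋c → ℂ) : ℝ :=
  ∫ t, (‖R t * f₁ t + f₂ t‖ ^ 2 + ‖φ t * f₁ t‖ ^ 2) ∂m

/-- Membership of the triple `(f₁, f₂, {f_k})` in `L²(α)`. -/
def MemL2α (R φ : 𝕋c → ℂ) (ν : ℕ → ℝ) (f₁ f₂ : 𝕋c → ℂ) (fk : ℕ → ℂ) : Prop :=
  MemV R φ f₁ f₂ ∧ Summable (fun k => ν k * ‖fk k‖ ^ 2)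

/-- The squared norm on `L²(α)`. -/
def αnormSq (R φ : 𝕋c → ℂ) (ν : ℕ → ℝ) (f₁ f₂ : 𝕋c → ℂ) (fk : ℕ → ℂ) : ℝ :=
  VnormSq R φ f₁ f₂ + ∑' k, ν k * ‖fk k‖ ^ 2

/-- Membership in `čH²(α)`: the triple lies in `L²(α)` and is approximated in the `L²(α)`
norm by embedded admissible functions `ι(f) = (f, −P₋(Rf), {f(ζ_k)})`. -/
def MemCheckH2 (R φ : 𝕋c → ℂ) (ζ : ℕ → ℂ) (ν : ℕ → ℝ)
    (f₁ f₂ : 𝕋c → ℂ) (fk : ℕ → ℂ) : Prop :=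
  MemL2α R φ ν f₁ f₂ fk ∧
  ∀ ε : ℝ, 0 < ε → ∃ f p : 𝕋c → ℂ, Admissible ζ f ∧ IsPneg (fun t => R t * f t) p ∧
    VnormSq R φ (fun t => f₁ t - f t) (fun t => f₂ t + p t) +
      ∑' k, ν k * ‖fk k - evalD f (ζ k)‖ ^ 2 < ε

/-- Membership in `ĤH²(α)`: `g := φf₁ ∈ H²` and `f_k·φ(ζ_k) = g(ζ_k)` for all `k`. -/
def MemHatH2 (R φ : 𝕋c → ℂ) (ζ : ℕ → ℂ) (ν : ℕ → ℝ)
    (f₁ f₂ : 𝕋c → ℂ) (fk : ℕ → ℂ) : Prop :=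
  MemL2α R φ ν f₁ f₂ fk ∧
  (∀ n : ℤ, n < 0 → fourierCoeff (fun t => φ t * f₁ t) n = 0) ∧
  ∀ k, fk k * evalD φ (ζ k) = evalD (fun t => φ t * f₁ t) (ζ k)

/-- The dual coefficient `R^τ`; note that on the additive circle, `conj t` corresponds
to `−t`, so `R^τ(s) = −R(conj s)·conj(φ(conj s))·β(conj s)/φ(conj s)`. -/
def dualR (R φ β : 𝕋c → ℂ) : 𝕋c → ℂ := fun s => -R (-s) * conj (φ (-s)) * β (-s) / φ (-s)

/-- `φ^τ(t) = conj(φ(conj t))`. -/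
def dualφ (φ : 𝕋c → ℂ) : 𝕋c → ℂ := fun s => conj (φ (-s))

/-- `β^τ(t) = conj(β(conj t))`. -/
def dualβ (β : 𝕋c → ℂ) : 𝕋c → ℂ := fun s => conj (β (-s))

/-- The reflected points `conj ζ_k`. -/
def dualζ (ζ : ℕ → ℂ) : ℕ → ℂ := fun k => conj (ζ k)

/-- The dual masses `ν^τ_k = |T_e(ζ_k)/B′(ζ_k)|²/ν_k`. -/
def dualν (φ : 𝕋c → ℂ) (ζ : ℕ → ℂ) (ν : ℕ → ℝ) : ℕ → ℝ :=
  fun k => ‖evalD φ (ζ k) / deriv (Bprod ζ) (ζ k)‖ ^ 2 / ν k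

/-- The defining relations of the map `τ` on triples: on the circle
`f₁(t) + conj(R(t))f₂(t) = conj(φ(t))β(t)·conj(t)·f₁^τ(conj t)` and
`R(t)f₁(t) + f₂(t) = φ(t)·conj(t)·f₂^τ(conj t)` (here `conj t ↔ −t` and the complex
number `t` is `fourier 1 t`), and `f^τ_k = −conj(B′(ζ_k)/T_e(ζ_k))·f_k·ν_k`. -/
def TauRel (R φ β : 𝕋c → ℂ) (ζ : ℕ → ℂ) (ν : ℕ → ℝ)
    (f₁ f₂ : 𝕋c → ℂ) (fk : ℕ → ℂ) (h₁ h₂ : 𝕋c → ℂ) (hk : ℕ → ℂ) : Prop :=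
  (∀ᵐ t ∂m, f₁ t + conj (R t) * f₂ t = conj (φ t) * β t * fourier (-1) t * h₁ (-t) ∧
      R t * f₁ t + f₂ t = φ t * fourier (-1) t * h₂ (-t)) ∧
  ∀ k, hk k = -conj (deriv (Bprod ζ) (ζ k) / evalD φ (ζ k)) * fk k * ν k

/-- Membership in `L²(α) ⊖ čH²(α)`: a triple of `L²(α)` orthogonal to every embedded
admissible function. -/
def PerpCheck (R φ : 𝕋c → ℂ) (ζ : ℕ → ℂ) (ν : ℕ → ℝ)
    (f₁ f₂ : 𝕋c → ℂ) (fk : ℕ → ℂ) : Prop :=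
  MemL2α R φ ν f₁ f₂ fk ∧
  ∀ f p : 𝕋c → ℂ, Admissible ζ f → IsPneg (fun t => R t * f t) p →
    (∫ t, ((R t * f₁ t + f₂ t) * conj (R t * f t + -p t) +
        (φ t * f₁ t) * conj (φ t * f t)) ∂m) +
      ∑' k, (ν k : ℂ) * fk k * conj (evalD f (ζ k)) = 0
private lemma fourier_norm_one' (n : ℤ) (x : 𝕋c) : ‖fourier n x‖ = 1 :=
  Circle.norm_coe _

private lemma conj_memℒp {p : ENNReal} {f : 𝕋c → ℂ} (hf : MemLp f p m) :
    MemLp (fun t => conj (f t)) p m := by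
  refine hf.of_le_mul (c := 1) (continuous_star.comp_aestronglyMeasurable hf.aestronglyMeasurable)
    (Filter.Eventually.of_forall fun t => ?_)
  rw [one_mul, RCLike.norm_conj]

private lemma mulL2_integrable {f h : 𝕋c → ℂ} (hf : MemLp f 2 m) (hh : MemLp h 2 m) :
    Integrable (fun t => f t * h t) m := by
  have : MemLp (f • h) 1 m := MemLp.smul (r := 1) hh hf
  rw [memLp_one_iff_integrable] at this
  simpa [Pi.smul_apply, smul_eq_mul, Pi.mul_def] using this

/-- if `φ ∈ L^∞ ∩ H²` is outer and `d ∈ H²` with `conj(φ)·d ∈ H²₋`,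
then `d = 0` in `L²`. -/
theorem direct_sum_property (φ : 𝕋c → ℂ) (hφb : MemLp φ ⊤ m) (hφ : IsOuter φ)
    (d : 𝕋c → ℂ) (hd : InH2 d)
    (hneg : ∀ n : ℤ, 0 ≤ n → fourierCoeff (fun t => conj (φ t) * d t) n = 0) :
    ∀ᵐ t ∂m, d t = 0 := by
  classical
  obtain ⟨hdL2, hdc⟩ := hd
  have hφL2 : MemLp φ 2 m := hφ.1.1
  set g : 𝕋c → ℂ := fun t => conj (φ t) * d t with hg
  have hconjφ_top : MemLp (fun t => conj (φ t)) ⊤ m := conj_memℒp hφb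
  have hgL2 : MemLp g 2 m := by
    have := hdL2.smul (r := 2) hconjφ_top
    simpa [Pi.smul_apply, smul_eq_mul, Pi.mul_def] using this
  have hgInt : Integrable g m := hgL2.integrable one_le_two
  have hconjdL2 : MemLp (fun t => conj (d t)) 2 m := conj_memℒp hdL2
  -- Key: the inner product of d with φ·p vanishes for analytic polynomials
  have key0 : ∀ p : 𝕋c → ℂ, IsAnalyticPoly p →
      ∫ t, conj (d t) * (φ t * p t) ∂m = 0 := by
    rintro p ⟨N, c, rfl⟩
    have h1 : ∫ t, d t * conj (φ t * ∑ j ∈ Finset.range N, c j * fourier (j : ℤ) t) ∂m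
        = 0 := by
      have hcong : ∀ t, d t * conj (φ t * ∑ j ∈ Finset.range N, c j * fourier (j : ℤ) t)
          = ∑ j ∈ Finset.range N, conj (c j) * (fourier (-(j : ℤ)) t * g t) := by
        intro t
        simp only [map_mul, map_sum, Finset.mul_sum, hg]
        refine Finset.sum_congr rfl fun j _ => ?_
        rw [← fourier_neg]
        ring
      have hint : ∀ j ∈ Finset.range N, Integrable
          (fun t => conj (c j) * (fourier (-(j : ℤ)) t * g t)) m := by
        intro j _
        exact ((hgInt.bdd_mul ((map_continuous (fourier (-(j : ℤ)))).aestronglyMeasurable)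
          (c := 1) (Filter.Eventually.of_forall fun x => le_of_eq (fourier_norm_one' _ x))).const_mul _)
      calc ∫ t, d t * conj (φ t * ∑ j ∈ Finset.range N, c j * fourier (j : ℤ) t) ∂m
          = ∫ t, ∑ j ∈ Finset.range N, conj (c j) * (fourier (-(j : ℤ)) t * g t) ∂m :=
            integral_congr_ae (Filter.Eventually.of_forall hcong)
        _ = ∑ j ∈ Finset.range N, ∫ t, conj (c j) * (fourier (-(j : ℤ)) t * g t) ∂m :=
            integral_finset_sum _ hint
        _ = ∑ j ∈ Finset.range N, conj (c j) * fourierCoeff g (j : ℤ) := by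
            refine Finset.sum_congr rfl fun j _ => ?_
            rw [MeasureTheory.integral_const_mul]
            rfl
        _ = 0 := by
            refine Finset.sum_eq_zero fun j _ => ?_
            rw [hneg (j : ℤ) (Int.ofNat_nonneg j), mul_zero]
    have h2 : ∫ t, conj (d t) * (φ t * ∑ j ∈ Finset.range N, c j * fourier (j : ℤ) t) ∂m
        = conj (∫ t, d t * conj (φ t * ∑ j ∈ Finset.range N, c j * fourier (j : ℤ) t) ∂m) := by
      rw [← integral_conj]
      refine integral_congr_ae (Filter.Eventually.of_forall fun t => ?_)
      simp
    rw [h2, h1, map_zero]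
  -- The squared L² norm of d
  set A : ℝ := ∫ t, ‖d t‖ ^ 2 ∂m with hA
  have hA_nonneg : 0 ≤ A := integral_nonneg fun t => sq_nonneg _
  have hAint : Integrable (fun t => ‖d t‖ ^ 2) m := hdL2.norm.integrable_sq
  -- main estimate: for every ε > 0, A ≤ √A * √ε
  have main : ∀ ε : ℝ, 0 < ε → A ≤ Real.sqrt A * Real.sqrt ε := by
    intro ε hε
    obtain ⟨p, hp_poly, hp_close⟩ := hφ.2 d ⟨hdL2, hdc⟩ ε hε
    obtain ⟨N, c, hpc⟩ := hp_poly
    have hp_cont : Continuous p := by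
      rw [hpc]
      exact continuous_finset_sum _ fun j _ =>
        continuous_const.mul (map_continuous (fourier (j : ℤ)))
    have hp_top : MemLp p ⊤ m := by
      refine memLp_top_of_bound hp_cont.aestronglyMeasurable
        (∑ j ∈ Finset.range N, ‖c j‖) (Filter.Eventually.of_forall fun t => ?_)
      rw [hpc]
      refine (norm_sum_le _ _).trans (le_of_eq (Finset.sum_congr rfl fun j _ => ?_))
      rw [norm_mul, fourier_norm_one', mul_one]
    have hφpL2 : MemLp (fun t => φ t * p t) 2 m := by
      have := hp_top.smul (r := 2) hφL2
      simpa [Pi.smul_apply, smul_eq_mul, Pi.mul_def] using this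
    have hdiffL2 : MemLp (fun t => d t - φ t * p t) 2 m := hdL2.sub hφpL2
    have hint1 : Integrable (fun t => conj (d t) * (d t - φ t * p t)) m :=
      mulL2_integrable hconjdL2 hdiffL2
    have hint2 : Integrable (fun t => conj (d t) * (φ t * p t)) m :=
      mulL2_integrable hconjdL2 hφpL2
    -- A, as a complex number, equals ∫ conj d * (d - φp)
    have hAC : (A : ℂ) = ∫ t, conj (d t) * (d t - φ t * p t) ∂m := by
      have e1 : (A : ℂ) = ∫ t, conj (d t) * d t ∂m := by
        have hpt : ∀ t, conj (d t) * d t = ((‖d t‖ ^ 2 : ℝ) : ℂ) := fun t => by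
          rw [RCLike.conj_mul]; norm_cast
        rw [integral_congr_ae (Filter.Eventually.of_forall hpt)]
        rw [hA]
        exact integral_ofReal.symm
      have e2 : ∫ t, conj (d t) * d t ∂m
          = (∫ t, conj (d t) * (d t - φ t * p t) ∂m) + ∫ t, conj (d t) * (φ t * p t) ∂m := by
        rw [← integral_add hint1 hint2]
        refine integral_congr_ae (Filter.Eventually.of_forall fun t => ?_)
        ring
      rw [e1, e2, key0 p ⟨N, c, hpc⟩, add_zero]
    -- estimate
    have hnorm : A = ‖(A : ℂ)‖ := by
      rw [Complex.norm_real, Real.norm_of_nonneg hA_nonneg]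
    have step1 : A ≤ ∫ t, ‖d t‖ * ‖d t - φ t * p t‖ ∂m := by
      rw [hnorm, hAC]
      refine (norm_integral_le_integral_norm _).trans (le_of_eq ?_)
      refine integral_congr_ae (Filter.Eventually.of_forall fun t => ?_)
      simp [norm_mul, RCLike.norm_conj]
    have holder : ∫ t, ‖d t‖ * ‖d t - φ t * p t‖ ∂m
        ≤ (∫ t, ‖d t‖ ^ (2 : ℝ) ∂m) ^ ((1 : ℝ) / 2)
          * (∫ t, ‖d t - φ t * p t‖ ^ (2 : ℝ) ∂m) ^ ((1 : ℝ) / 2) := by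
      refine integral_mul_le_Lp_mul_Lq_of_nonneg Real.HolderConjugate.two_two
        (Filter.Eventually.of_forall fun t => norm_nonneg _)
        (Filter.Eventually.of_forall fun t => norm_nonneg _) ?_ ?_
      · simpa [ENNReal.ofReal_ofNat] using hdL2.norm
      · simpa [ENNReal.ofReal_ofNat] using hdiffL2.norm
    have hsq : ∀ f : 𝕋c → ℂ, (∫ t, ‖f t‖ ^ (2 : ℝ) ∂m) ^ ((1 : ℝ) / 2)
        = Real.sqrt (∫ t, ‖f t‖ ^ 2 ∂m) := by
      intro f
      rw [Real.sqrt_eq_rpow]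
      congr 1
      refine integral_congr_ae (Filter.Eventually.of_forall fun t => ?_)
      show ‖f t‖ ^ (2 : ℝ) = ‖f t‖ ^ 2
      rw [← Real.rpow_natCast (‖f t‖) 2]
      norm_num
    have hεbound : Real.sqrt (∫ t, ‖d t - φ t * p t‖ ^ 2 ∂m) ≤ Real.sqrt ε := by
      refine Real.sqrt_le_sqrt (le_of_lt ?_)
      refine lt_of_le_of_lt (le_of_eq ?_) hp_close
      refine integral_congr_ae (Filter.Eventually.of_forall fun t => ?_)
      show ‖d t - φ t * p t‖ ^ 2 = ‖φ t * p t - d t‖ ^ 2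
      rw [norm_sub_rev]
    calc A ≤ ∫ t, ‖d t‖ * ‖d t - φ t * p t‖ ∂m := step1
      _ ≤ (∫ t, ‖d t‖ ^ (2 : ℝ) ∂m) ^ ((1 : ℝ) / 2)
          * (∫ t, ‖d t - φ t * p t‖ ^ (2 : ℝ) ∂m) ^ ((1 : ℝ) / 2) := holder
      _ = Real.sqrt A * Real.sqrt (∫ t, ‖d t - φ t * p t‖ ^ 2 ∂m) := by
          rw [hsq, hsq, hA]
      _ ≤ Real.sqrt A * Real.sqrt ε :=
          mul_le_mul_of_nonneg_left hεbound (Real.sqrt_nonneg _)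
  -- conclude A = 0
  have hA0 : A = 0 := by
    by_contra h0
    have hApos : 0 < A := lt_of_le_of_ne hA_nonneg (Ne.symm h0)
    have h := main (A / 2) (by linarith)
    have s1 : Real.sqrt A ^ 2 = A := Real.sq_sqrt hA_nonneg
    have s2 : Real.sqrt (A / 2) ^ 2 = A / 2 := Real.sq_sqrt (by linarith)
    nlinarith [Real.sqrt_nonneg A, Real.sqrt_nonneg (A / 2), h, s1, s2, hApos]
  have : (fun t => ‖d t‖ ^ 2) =ᵐ[m] 0 := by
    rw [← integral_eq_zero_iff_of_nonneg (fun t => sq_nonneg _) hAint]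
    exact hA0
  filter_upwards [this] with t ht
  have : ‖d t‖ ^ 2 = 0 := ht
  have : ‖d t‖ = 0 := by
    nlinarith [norm_nonneg (d t)]
  simpa using this
end
end

section
/- (Uniqueness of the second component in L²_R.) Suppose (f₁, f₂) ∈ V and (f₁, f₂′) ∈ V with the same first component f₁. Then f₂ = f₂′ a.e. on 𝕋. In other words, in the space L²_R the first component determines the second component uniquely. -/
open MeasureTheory Complex Filter ComplexConjugate
open scoped Real Topology

noncomputable section

/-! ### Auxiliary lemmas -/

lemma norm_fourier' (n : ℤ) (t : 𝕋c) : ‖(fourier n t : ℂ)‖ = 1 := by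
  simp [fourier_apply, Circle.norm_coe]

lemma fourierCoeff_sub' {f g : 𝕋c → ℂ} (hf : Integrable f m) (hg : Integrable g m) (n : ℤ) :
    fourierCoeff (fun t => f t - g t) n = fourierCoeff f n - fourierCoeff g n := by
  unfold fourierCoeff
  simp_rw [smul_sub]
  exact integral_sub
    (hf.bdd_mul (map_continuous (fourier (-n))).aestronglyMeasurable
      (c := 1) (Filter.Eventually.of_forall fun x => le_of_eq (norm_fourier' _ _)))
    (hg.bdd_mul (map_continuous (fourier (-n))).aestronglyMeasurable
      (c := 1) (Filter.Eventually.of_forall fun x => le_of_eq (norm_fourier' _ _)))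

lemma poly_memℒp_top {p : 𝕋c → ℂ} (hp : IsAnalyticPoly p) : MemLp p ⊤ m := by
  obtain ⟨N, c, rfl⟩ := hp
  have hc : Continuous fun t : 𝕋c => ∑ j ∈ Finset.range N, c j * fourier (j : ℤ) t :=
    continuous_finset_sum _ fun j _ => continuous_const.mul (map_continuous (fourier (j:ℤ)))
  refine memLp_top_of_bound hc.aestronglyMeasurable (∑ j ∈ Finset.range N, ‖c j‖) ?_
  refine Filter.Eventually.of_forall fun t => ?_
  calc ‖∑ j ∈ Finset.range N, c j * fourier (j : ℤ) t‖
      ≤ ∑ j ∈ Finset.range N, ‖c j * fourier (j : ℤ) t‖ := norm_sum_le _ _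
    _ = ∑ j ∈ Finset.range N, ‖c j‖ := by
        refine Finset.sum_congr rfl fun j _ => ?_
        rw [norm_mul, norm_fourier', mul_one]

lemma inner_zero_of_H2neg {φ g p : 𝕋c → ℂ} (hφtop : MemLp φ ⊤ m) (hg : MemLp g 2 m)
    (hcg : ∀ n : ℤ, 0 ≤ n → fourierCoeff (fun t => conj (φ t) * g t) n = 0)
    (hp : IsAnalyticPoly p) :
    ∫ t, conj (g t) * (φ t * p t) ∂m = 0 := by
  obtain ⟨N, c, rfl⟩ := hp
  have hφ2 : MemLp φ 2 m := hφtop.mono_exponent le_top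
  have hgc : MemLp (fun t => conj (g t)) 2 m :=
    ⟨RCLike.continuous_conj.comp_aestronglyMeasurable hg.1, by
      have := hg.2; rwa [← eLpNorm_conj g 2 m] at this⟩
  have hmul : Integrable (fun t => conj (g t) * φ t) m := by
    have h2 : (1:ENNReal) / 1 = 1 / 2 + 1 / 2 := by
      rw [ENNReal.div_add_div_same, one_add_one_eq_two,
        ENNReal.div_self two_ne_zero ENNReal.ofNat_ne_top]; simp
    haveI : ENNReal.HolderTriple 2 2 1 := ⟨by rw [ENNReal.inv_two_add_inv_two, inv_one]⟩
    have := hφ2.smul (p := 2) (q := 2) (r := 1) hgc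
    exact memLp_one_iff_integrable.mp this
  have key : ∀ j : ℕ, ∫ t, (fourier (j:ℤ) t : ℂ) * (conj (g t) * φ t) ∂m = 0 := by
    intro j
    have h1 : ∫ t, (fourier (j:ℤ) t : ℂ) * (conj (g t) * φ t) ∂m
        = conj (∫ t, (fourier (-(j:ℤ)) t : ℂ) * (conj (φ t) * g t) ∂m) := by
      rw [← integral_conj]
      refine integral_congr_ae (Filter.Eventually.of_forall fun t => ?_)
      beta_reduce
      rw [map_mul, map_mul, conj_conj,
        show conj ((fourier (-(j:ℤ)) t : ℂ)) = fourier (j:ℤ) t by rw [fourier_neg, conj_conj]]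
      ring
    rw [h1, show (∫ t, (fourier (-(j:ℤ)) t : ℂ) * (conj (φ t) * g t) ∂m)
        = fourierCoeff (fun t => conj (φ t) * g t) (j:ℤ) from rfl,
      hcg (j:ℤ) (Int.ofNat_nonneg j), map_zero]
  beta_reduce
  calc ∫ t, conj (g t) * (φ t * ∑ j ∈ Finset.range N, c j * fourier (j : ℤ) t) ∂m
      = ∫ t, ∑ j ∈ Finset.range N, c j * ((fourier (j:ℤ) t : ℂ) * (conj (g t) * φ t)) ∂m := by
        refine integral_congr_ae (Filter.Eventually.of_forall fun t => ?_)
        beta_reduce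
        rw [Finset.mul_sum, Finset.mul_sum]
        refine Finset.sum_congr rfl fun j _ => ?_
        ring
    _ = ∑ j ∈ Finset.range N, c j * ∫ t, (fourier (j:ℤ) t : ℂ) * (conj (g t) * φ t) ∂m := by
        have hi : ∀ j ∈ Finset.range N,
            Integrable (fun t => c j * ((fourier (j:ℤ) t : ℂ) * (conj (g t) * φ t))) m :=
          fun j _ => (hmul.bdd_mul
            (map_continuous (fourier (j:ℤ))).aestronglyMeasurable
            (c := 1) (Filter.Eventually.of_forall fun x => le_of_eq (norm_fourier' _ _))).const_mul (c j)
        rw [integral_finset_sum _ hi]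
        exact Finset.sum_congr rfl fun j _ => integral_const_mul _ _
    _ = 0 := by
        refine Finset.sum_eq_zero fun j _ => ?_
        rw [key j, mul_zero]

lemma inner_toLp_eq {u v : 𝕋c → ℂ} (hu : MemLp u 2 m) (hv : MemLp v 2 m) :
    (inner ℂ (hu.toLp u) (hv.toLp v) : ℂ) = ∫ t, conj (u t) * v t ∂m := by
  rw [MeasureTheory.L2.inner_def]
  refine integral_congr_ae ?_
  filter_upwards [hu.coeFn_toLp, hv.coeFn_toLp] with t h1 h2
  rw [RCLike.inner_apply', h1, h2]

lemma normsq_toLp {f : 𝕋c → ℂ} (hf : MemLp f 2 m) :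
    ‖hf.toLp f‖ ^ 2 = ∫ t, ‖f t‖ ^ 2 ∂m := by
  have h1 : (inner ℂ (hf.toLp f) (hf.toLp f) : ℂ) = ((∫ t, ‖f t‖ ^ 2 ∂m : ℝ) : ℂ) := by
    rw [inner_toLp_eq hf hf]
    calc ∫ t, conj (f t) * f t ∂m = ∫ t, ((‖f t‖ ^ 2 : ℝ) : ℂ) ∂m := by
          refine integral_congr_ae (Filter.Eventually.of_forall fun t => ?_)
          beta_reduce; rw [RCLike.conj_mul]; norm_cast
      _ = ((∫ t, ‖f t‖ ^ 2 ∂m : ℝ) : ℂ) := integral_ofReal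
  have h2 := inner_self_eq_norm_sq (𝕜 := ℂ) (hf.toLp f)
  rw [h1] at h2
  simpa using h2.symm

/-- in `L²_R = V`, the first component determines the second uniquely. -/
theorem second_component_unique (R : 𝕋c → ℂ) (hRm : MemLp R ⊤ m)
    (hR1 : ∀ᵐ t ∂m, ‖R t‖ ≤ 1)
    (hSz : Integrable (fun t => Real.log (1 - ‖R t‖)) m)
    (φ : 𝕋c → ℂ) (hφb : MemLp φ ⊤ m) (hφout : IsOuter φ)
    (hφR : ∀ᵐ t ∂m, ‖φ t‖ ^ 2 = 1 - ‖R t‖ ^ 2)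
    (hφ0 : ∃ c : ℝ, 0 < c ∧ fourierCoeff φ 0 = c)
    (f₁ f₂ f₂' : 𝕋c → ℂ) (h : MemV R φ f₁ f₂) (h' : MemV R φ f₁ f₂') :
    ∀ᵐ t ∂m, f₂ t = f₂' t  := by
  obtain ⟨hf₁m, hf₂m, hφf₁, hφf₂, hcoefneg, hRf, hRfcoef⟩ := h
  obtain ⟨_, hf₂'m, _, hφf₂', hcoefneg', hRf', hRfcoef'⟩ := h'
  set g : 𝕋c → ℂ := fun t => f₂ t - f₂' t with hgdef
  have heq : g = fun t => (R t * f₁ t + f₂ t) - (R t * f₁ t + f₂' t) := by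
    funext t; simp only [hgdef]; ring
  have hgL2 : MemLp g 2 m := by rw [heq]; exact hRf.sub hRf'
  have hgcoef : ∀ n : ℤ, n < 0 → fourierCoeff g n = 0 := by
    intro n hn
    rw [heq, fourierCoeff_sub' (hRf.integrable one_le_two) (hRf'.integrable one_le_two),
      hRfcoef n hn, hRfcoef' n hn, sub_zero]
  have hcg : ∀ n : ℤ, 0 ≤ n → fourierCoeff (fun t => conj (φ t) * g t) n = 0 := by
    intro n hn
    have he : (fun t => conj (φ t) * g t)
        = fun t => (conj (φ t) * f₂ t) - (conj (φ t) * f₂' t) := by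
      funext t; simp only [hgdef]; ring
    rw [he, fourierCoeff_sub' (hφf₂.integrable one_le_two) (hφf₂'.integrable one_le_two),
      hcoefneg n hn, hcoefneg' n hn, sub_zero]
  have hφ2 : MemLp φ 2 m := hφb.mono_exponent le_top
  set G : Lp ℂ 2 m := hgL2.toLp g with hGdef
  -- key estimate: for every ε > 0, ‖G‖² ≤ ‖G‖·√ε
  have hkey : ∀ ε : ℝ, 0 < ε → ‖G‖ ^ 2 ≤ ‖G‖ * Real.sqrt ε := by
    intro ε hε
    obtain ⟨p, hpoly, happrox⟩ := hφout.2 g ⟨hgL2, hgcoef⟩ ε hε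
    have hp_top : MemLp p ⊤ m := poly_memℒp_top hpoly
    have hφp2 : MemLp (fun t => φ t * p t) 2 m := by
      have h1 : MemLp (p • φ) 2 m := hφ2.smul hp_top
      refine (memLp_congr_ae ?_).mp h1
      exact Filter.Eventually.of_forall fun t => mul_comm (p t) (φ t)
    set H : Lp ℂ 2 m := hφp2.toLp _ with hHdef
    have hin : (inner ℂ G H : ℂ) = 0 := by
      rw [hGdef, hHdef, inner_toLp_eq hgL2 hφp2]
      exact inner_zero_of_H2neg hφb hgL2 hcg hpoly
    have hdiff : ‖G - H‖ ^ 2 < ε := by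
      rw [hGdef, hHdef, ← MemLp.toLp_sub, normsq_toLp]
      have : ∫ t, ‖(g - fun t => φ t * p t) t‖ ^ 2 ∂m
          = ∫ t, ‖φ t * p t - g t‖ ^ 2 ∂m := by
        refine integral_congr_ae (Filter.Eventually.of_forall fun t => ?_)
        beta_reduce
        rw [Pi.sub_apply, norm_sub_rev]
      rw [this]
      exact happrox
    have h3 : ‖G‖ ^ 2 ≤ ‖G‖ * ‖G - H‖ := by
      have e1 : (‖G‖ : ℝ) ^ 2 = RCLike.re (inner ℂ G G : ℂ) :=
        (inner_self_eq_norm_sq G).symm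
      have e2 : (inner ℂ G G : ℂ) = (inner ℂ G (G - H) : ℂ) := by
        rw [inner_sub_right, hin, sub_zero]
      have e3 : RCLike.re (inner ℂ G (G - H) : ℂ) ≤ ‖(inner ℂ G (G - H) : ℂ)‖ :=
        RCLike.re_le_norm _
      have e4 : ‖(inner ℂ G (G - H) : ℂ)‖ ≤ ‖G‖ * ‖G - H‖ := norm_inner_le_norm _ _
      rw [e1, e2]
      exact e3.trans e4
    have h5 : ‖G - H‖ ≤ Real.sqrt ε := by
      nlinarith [Real.sq_sqrt hε.le, Real.sqrt_nonneg ε, norm_nonneg (G - H), hdiff]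
    exact h3.trans (mul_le_mul_of_nonneg_left h5 (norm_nonneg G))
  have hGz : ‖G‖ = 0 := by
    by_contra hG0
    have hpos : 0 < ‖G‖ := lt_of_le_of_ne (norm_nonneg _) (Ne.symm hG0)
    have := hkey ((‖G‖ / 2) ^ 2) (by positivity)
    rw [Real.sqrt_sq (by positivity)] at this
    nlinarith
  have hG0 : G = 0 := norm_eq_zero.mp hGz
  have hae : g =ᵐ[m] 0 := by
    have h1 : ⇑G =ᵐ[m] g := hgL2.coeFn_toLp
    have h2 : ⇑G =ᵐ[m] 0 := by rw [hG0]; exact MeasureTheory.Lp.coeFn_zero _ _ _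
    exact h1.symm.trans h2
  filter_upwards [hae] with t ht
  have hz : f₂ t - f₂' t = 0 := by simpa [hgdef] using ht
  exact sub_eq_zero.mp hz
end
end

section
/- For every f ∈ L², the pair (f, −P₋(Rf)) belongs to V — that is, φf ∈ L², conj(φ)·P₋(Rf) ∈ H²₋, and Rf − P₋(Rf) ∈ H² — and its norm satisfies ‖(f, −P₋(Rf))‖_V² = ‖f‖² − ‖P₋(Rf)‖². -/
open MeasureTheory Complex Filter ComplexConjugate
open scoped Real Topology

noncomputable section

section Aux

local notation "⟪" x ", " y "⟫" => @inner ℂ _ _ x y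

lemma memL2_of_memTop {g : 𝕋c → ℂ} (hg : MemLp g ⊤ m) : MemLp g 2 m :=
  hg.mono_exponent le_top

lemma memL2_mul {a g : 𝕋c → ℂ} (ha : MemLp a ⊤ m) (hg : MemLp g 2 m) :
    MemLp (fun t => a t * g t) 2 m :=
  (hg.smul (p := ⊤) (r := 2) ha).ae_eq (Filter.Eventually.of_forall fun t => rfl)

lemma memTop_conj {g : 𝕋c → ℂ} (hg : MemLp g ⊤ m) :
    MemLp (fun t => conj (g t)) ⊤ m :=
  ⟨RCLike.continuous_conj.comp_aestronglyMeasurable hg.1, by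
    calc eLpNorm (fun t => conj (g t)) ⊤ m = eLpNorm (conj g) ⊤ m := rfl
      _ = eLpNorm g ⊤ m := eLpNorm_conj g ⊤ m
      _ < ⊤ := hg.2⟩

lemma memTop_fourier (n : ℤ) : MemLp (fun t : 𝕋c => (fourier n t : ℂ)) ⊤ m :=
  memLp_top_of_bound (fourier n).continuous.aestronglyMeasurable 1
    (Filter.Eventually.of_forall fun x => by
      simp [fourier_apply, Circle.norm_coe])

lemma integrable_of_L2 {g : 𝕋c → ℂ} (hg : MemLp g 2 m) : Integrable g m :=
  hg.integrable one_le_two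

lemma fourierCoeff_toLp' {g : 𝕋c → ℂ} (hg : MemLp g 2 m) (n : ℤ) :
    fourierCoeff (hg.toLp g : 𝕋c → ℂ) n = fourierCoeff g n :=
  integral_congr_ae <| by
    filter_upwards [hg.coeFn_toLp] with t ht
    rw [ht]

lemma inner_toLp_eq_s6 {g h : 𝕋c → ℂ} (hg : MemLp g 2 m) (hh : MemLp h 2 m) :
    ⟪hg.toLp g, hh.toLp h⟫ = ∫ t, conj (g t) * h t ∂m := by
  rw [MeasureTheory.L2.inner_def]
  refine integral_congr_ae ?_
  filter_upwards [hg.coeFn_toLp, hh.coeFn_toLp] with t h1 h2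
  rw [RCLike.inner_apply, h1, h2, mul_comm]

lemma hasSum_conj_mul {g h : 𝕋c → ℂ} (hg : MemLp g 2 m) (hh : MemLp h 2 m) :
    HasSum (fun n : ℤ => conj (fourierCoeff g n) * fourierCoeff h n)
      (∫ t, conj (g t) * h t ∂m) := by
  have H := fourierBasis.hasSum_inner_mul_inner (hg.toLp g) (hh.toLp h)
  have h1 : ∀ n : ℤ, ⟪hg.toLp g, fourierBasis n⟫ * ⟪fourierBasis n, hh.toLp h⟫
      = conj (fourierCoeff g n) * fourierCoeff h n := by
    intro n
    rw [← inner_conj_symm, ← HilbertBasis.repr_apply_apply, ← HilbertBasis.repr_apply_apply,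
      fourierBasis_repr, fourierBasis_repr, fourierCoeff_toLp' hg, fourierCoeff_toLp' hh]
  rw [inner_toLp_eq_s6 hg hh] at H
  simpa only [h1] using H

lemma integrable_conj_mul {g h : 𝕋c → ℂ} (hg : MemLp g 2 m) (hh : MemLp h 2 m) :
    Integrable (fun t => conj (g t) * h t) m := by
  have H := MeasureTheory.L2.integrable_inner (𝕜 := ℂ) (hg.toLp g) (hh.toLp h)
  refine H.congr ?_
  filter_upwards [hg.coeFn_toLp, hh.coeFn_toLp] with t h1 h2
  rw [RCLike.inner_apply, h1, h2, mul_comm]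

lemma fourierCoeff_add' {g h : 𝕋c → ℂ} (hg : MemLp g 2 m) (hh : MemLp h 2 m) (n : ℤ) :
    fourierCoeff (fun t => g t + h t) n = fourierCoeff g n + fourierCoeff h n := by
  have Ig : Integrable (fun t => (fourier (-n) t : ℂ) • g t) m :=
    (integrable_of_L2 (memL2_mul (memTop_fourier (-n)) hg))
  have Ih : Integrable (fun t => (fourier (-n) t : ℂ) • h t) m :=
    (integrable_of_L2 (memL2_mul (memTop_fourier (-n)) hh))
  simp only [fourierCoeff, smul_add]
  exact integral_add Ig Ih

lemma fourierCoeff_neg' (g : 𝕋c → ℂ) (n : ℤ) :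
    fourierCoeff (fun t => -g t) n = -fourierCoeff g n := by
  simp only [fourierCoeff, smul_neg]
  exact integral_neg _

lemma fourierCoeff_fourier_mul (g : 𝕋c → ℂ) (n k : ℤ) :
    fourierCoeff (fun t => (fourier n t : ℂ) * g t) k = fourierCoeff g (k - n) := by
  simp only [fourierCoeff, smul_eq_mul]
  refine integral_congr_ae (Filter.Eventually.of_forall fun t => ?_)
  show (fourier (-k) t : ℂ) * ((fourier n t : ℂ) * g t) = (fourier (-(k - n)) t : ℂ) * g t
  rw [← mul_assoc, ← fourier_add, show -k + n = -(k - n) by ring]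

lemma integral_conj_mul_self {g : 𝕋c → ℂ} :
    (∫ t, conj (g t) * g t ∂m) = ((∫ t, ‖g t‖ ^ 2 ∂m : ℝ) : ℂ) := by
  calc (∫ t, conj (g t) * g t ∂m) = ∫ t, ((‖g t‖ ^ 2 : ℝ) : ℂ) ∂m := by
        refine integral_congr_ae (Filter.Eventually.of_forall fun t => ?_)
        show conj (g t) * g t = ((‖g t‖ ^ 2 : ℝ) : ℂ)
        rw [mul_comm, Complex.mul_conj, Complex.normSq_eq_norm_sq]
    _ = ((∫ t, ‖g t‖ ^ 2 ∂m : ℝ) : ℂ) := integral_ofReal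

end Aux
set_option maxHeartbeats 1000000 in
/-- for every `f ∈ L²`, the pair `(f, −P₋(Rf))` belongs to `V`, and
`‖(f, −P₋(Rf))‖_V² = ‖f‖² − ‖P₋(Rf)‖²`. -/
theorem pair_mem_V (R : 𝕋c → ℂ) (hRm : MemLp R ⊤ m)
    (hR1 : ∀ᵐ t ∂m, ‖R t‖ ≤ 1)
    (hSz : Integrable (fun t => Real.log (1 - ‖R t‖)) m)
    (φ : 𝕋c → ℂ) (hφb : MemLp φ ⊤ m) (hφout : IsOuter φ)
    (hφR : ∀ᵐ t ∂m, ‖φ t‖ ^ 2 = 1 - ‖R t‖ ^ 2)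
    (hφ0 : ∃ c : ℝ, 0 < c ∧ fourierCoeff φ 0 = c)
    (f : 𝕋c → ℂ) (hf : MemLp f 2 m)
    (p : 𝕋c → ℂ) (hp : IsPneg (fun t => R t * f t) p) :
    MemV R φ f (fun t => -p t) ∧
      VnormSq R φ f (fun t => -p t) = sqNorm f - sqNorm p := by
  obtain ⟨hp2, hplt, hpge⟩ := hp
  have hRf2 : MemLp (fun t => R t * f t) 2 m := memL2_mul hRm hf
  have hφf2 : MemLp (fun t => φ t * f t) 2 m := memL2_mul hφb hf
  have hφ2 : MemLp φ 2 m := memL2_of_memTop hφb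
  have hconjφ : MemLp (fun t => conj (φ t)) ⊤ m := memTop_conj hφb
  have hnegp2 : MemLp (fun t => -p t) 2 m :=
    hp2.neg.ae_eq (Filter.Eventually.of_forall fun t => rfl)
  have hφH2 : ∀ n : ℤ, n < 0 → fourierCoeff φ n = 0 := hφout.1.2
  -- the H²₋ condition for conj(φ)·(−p)
  have hconjcoeff : ∀ n : ℤ, 0 ≤ n →
      fourierCoeff (fun t => conj (φ t) * -p t) n = 0 := by
    intro n hn
    have hfourφ2 : MemLp (fun t => (fourier n t : ℂ) * φ t) 2 m :=
      memL2_mul (memTop_fourier n) hφ2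
    have key : (∫ t, conj (p t) * ((fourier n t : ℂ) * φ t) ∂m) = 0 := by
      have hs := hasSum_conj_mul hp2 hfourφ2
      have hz : (fun k : ℤ => conj (fourierCoeff p k) *
          fourierCoeff (fun t => (fourier n t : ℂ) * φ t) k) = fun _ => (0 : ℂ) := by
        funext k
        rcases le_or_gt 0 k with h | h
        · rw [hpge k h]; simp
        · rw [fourierCoeff_fourier_mul φ n k, hφH2 (k - n) (by omega)]; simp
      rw [hz] at hs
      exact hs.unique hasSum_zero
    calc fourierCoeff (fun t => conj (φ t) * -p t) n
        = ∫ t, -(conj (conj (p t) * ((fourier n t : ℂ) * φ t))) ∂m := by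
          simp only [fourierCoeff]
          refine integral_congr_ae (Filter.Eventually.of_forall fun t => ?_)
          show (fourier (-n) t : ℂ) • (conj (φ t) * -p t)
              = -(conj (conj (p t) * ((fourier n t : ℂ) * φ t)))
          simp only [smul_eq_mul, map_mul, Complex.conj_conj, ← fourier_neg]
          ring
      _ = -conj (∫ t, conj (p t) * ((fourier n t : ℂ) * φ t) ∂m) := by
          rw [integral_neg, integral_conj]
      _ = 0 := by rw [key]; simp
  -- the H² condition for Rf − p
  have hsum2 : MemLp (fun t => R t * f t + -p t) 2 m :=
    (hRf2.add hnegp2).ae_eq (Filter.Eventually.of_forall fun t => rfl)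
  have hsumcoeff : ∀ n : ℤ, n < 0 → fourierCoeff (fun t => R t * f t + -p t) n = 0 := by
    intro n hn
    rw [fourierCoeff_add' hRf2 hnegp2, fourierCoeff_neg' p, hplt n hn, add_neg_cancel]
  -- Parseval: ⟪Rf, p⟫ = ‖p‖²
  have hip : (∫ t, conj (R t * f t) * p t ∂m) = ((∫ t, ‖p t‖ ^ 2 ∂m : ℝ) : ℂ) := by
    have h1 := hasSum_conj_mul hRf2 hp2
    have h2 := hasSum_conj_mul hp2 hp2
    have he : (fun k : ℤ => conj (fourierCoeff (fun t => R t * f t) k) * fourierCoeff p k)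
        = fun k => conj (fourierCoeff p k) * fourierCoeff p k := by
      funext k
      rcases lt_or_ge k 0 with h | h
      · rw [hplt k h]
      · rw [hpge k h]; simp
    rw [he] at h1
    rw [h1.unique h2, integral_conj_mul_self]
  have hii : Integrable (fun t => conj (R t * f t) * p t) m := integrable_conj_mul hRf2 hp2
  have hre : (∫ t, (conj (R t * f t) * p t).re ∂m) = ∫ t, ‖p t‖ ^ 2 ∂m := by
    have h := integral_re (μ := m) hii
    simp only [RCLike.re_to_complex] at h
    rw [h, hip]
    exact Complex.ofReal_re _
  -- the norm identity
  have hVeq : VnormSq R φ f (fun t => -p t) = sqNorm f - sqNorm p := by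
    have hpt : ∀ᵐ t ∂m, ‖R t * f t + -p t‖ ^ 2 + ‖φ t * f t‖ ^ 2
        = (‖f t‖ ^ 2 + ‖p t‖ ^ 2) - 2 * (conj (R t * f t) * p t).re := by
      filter_upwards [hφR] with t ht
      have h1 : ‖φ t * f t‖ ^ 2 = ‖f t‖ ^ 2 - ‖R t * f t‖ ^ 2 := by
        rw [norm_mul, mul_pow, ht, norm_mul, mul_pow]; ring
      have h2 : ‖R t * f t + -p t‖ ^ 2
          = ‖R t * f t‖ ^ 2 + ‖p t‖ ^ 2 - 2 * (conj (R t * f t) * p t).re := by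
        have h3 := Complex.normSq_sub (R t * f t) (p t)
        have h4 : ((R t * f t) * conj (p t)).re = (conj (R t * f t) * p t).re := by
          rw [← Complex.conj_re ((R t * f t) * conj (p t)), map_mul, Complex.conj_conj,
            mul_comm]
        rw [← sub_eq_add_neg, Complex.sq_norm, h3, h4,
          ← Complex.sq_norm, ← Complex.sq_norm]
      rw [h1, h2]; ring
    have if2 : Integrable (fun t => ‖f t‖ ^ 2) m := hf.norm.integrable_sq
    have ip2 : Integrable (fun t => ‖p t‖ ^ 2) m := hp2.norm.integrable_sq
    have ii : Integrable (fun t => (conj (R t * f t) * p t).re) m := by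
      have h := hii.re
      simp only [RCLike.re_to_complex] at h
      exact h
    have iAB : Integrable (fun t => ‖f t‖ ^ 2 + ‖p t‖ ^ 2) m :=
      (if2.add ip2).congr (Filter.Eventually.of_forall fun t => rfl)
    have i2re : Integrable (fun t => 2 * (conj (R t * f t) * p t).re) m :=
      (ii.const_mul 2).congr (Filter.Eventually.of_forall fun t => rfl)
    calc VnormSq R φ f (fun t => -p t)
        = ∫ t, ((‖f t‖ ^ 2 + ‖p t‖ ^ 2) - 2 * (conj (R t * f t) * p t).re) ∂m := by
          simp only [VnormSq]
          exact integral_congr_ae hpt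
      _ = (∫ t, (‖f t‖ ^ 2 + ‖p t‖ ^ 2) ∂m)
          - ∫ t, 2 * (conj (R t * f t) * p t).re ∂m :=
          integral_sub iAB i2re
      _ = sqNorm f + sqNorm p - 2 * ∫ t, (conj (R t * f t) * p t).re ∂m := by
          rw [integral_add if2 ip2, integral_const_mul]
          rfl
      _ = sqNorm f - sqNorm p := by
          rw [hre]
          simp only [sqNorm]
          ring
  exact ⟨⟨hf.1, hnegp2.1, hφf2, memL2_mul hconjφ hnegp2, hconjcoeff, hsum2, hsumcoeff⟩, hVeq⟩
end
end
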